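/- Let X be a torsor under ℤ_p (a ℤ_p-torsor with its natural profinite topology). The ring R_φ of locally polynomial ℚ_p-valued functions on X decomposes as R_φ = R_0 ⊗ R_st, where R_0 is the ring of locally constant functions and R_st is the ring of polynomial functions on X. -/

import Mathlib

set_option synthInstance.maxHeartbeats 1000000
set_option maxHeartbeats 1000000
set_option linter.unusedVariables false


section stmt10

variable (p : ℕ) [Fact p.Prime]
  (X : Type*) [TopologicalSpace X] [AddTorsor ℤ_[p] X] (x₀ : X)

/-- `R₀`: the `ℚ_p`-module of locally constant functions on the `ℤ_p`-torsor `X`. -/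
noncomputable def R0 : Submodule ℚ_[p] (X → ℚ_[p]) where
  carrier := {f | IsLocallyConstant f}
  zero_mem' := IsLocallyConstant.const 0
  add_mem' := fun hf hg => hf.add hg
  smul_mem' := fun c _ hf => hf.comp fun y => c • y

/-- `R_st`: the `ℚ_p`-module of polynomial functions on the `ℤ_p`-torsor `X`
(via the trivialization `x ↦ x -ᵥ x₀`). -/
noncomputable def Rst : Submodule ℚ_[p] (X → ℚ_[p]) where
  carrier := {f | ∃ P : Polynomial ℚ_[p], ∀ x, f x = P.eval ((x -ᵥ x₀ : ℤ_[p]) : ℚ_[p])}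
  zero_mem' := ⟨0, by simp⟩
  add_mem' := by
    rintro f g ⟨P, hP⟩ ⟨Q, hQ⟩
    exact ⟨P + Q, fun x => by simp [hP x, hQ x]⟩
  smul_mem' := by
    rintro c f ⟨P, hP⟩
    exact ⟨Polynomial.C c * P, fun x => by simp [hP x]⟩

/-- `R_φ`: the `ℚ_p`-module of locally polynomial functions on the `ℤ_p`-torsor `X`:
functions agreeing with a polynomial function on each member of a finite clopen cover. -/
noncomputable def Rphi : Submodule ℚ_[p] (X → ℚ_[p]) where
  carrier := {f | ∃ (ι : Type) (_ : Fintype ι) (U : ι → Set X),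
    (∀ i, IsClopen (U i)) ∧ (∀ x, ∃ i, x ∈ U i) ∧
    ∀ i, ∃ P : Polynomial ℚ_[p], ∀ x ∈ U i, f x = P.eval ((x -ᵥ x₀ : ℤ_[p]) : ℚ_[p])}
  zero_mem' :=
    ⟨PUnit, inferInstance, fun _ => Set.univ, fun _ => isClopen_univ,
      fun x => ⟨PUnit.unit, trivial⟩, fun _ => ⟨0, by simp⟩⟩
  add_mem' := by
    rintro f g ⟨ι₁, _, U₁, hcl₁, hcov₁, hP₁⟩ ⟨ι₂, _, U₂, hcl₂, hcov₂, hP₂⟩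
    refine ⟨ι₁ × ι₂, inferInstance, fun i => U₁ i.1 ∩ U₂ i.2,
      fun i => (hcl₁ i.1).inter (hcl₂ i.2), ?_, ?_⟩
    · intro x
      obtain ⟨i, hi⟩ := hcov₁ x
      obtain ⟨j, hj⟩ := hcov₂ x
      exact ⟨(i, j), hi, hj⟩
    · rintro ⟨i, j⟩
      obtain ⟨P, hP⟩ := hP₁ i
      obtain ⟨Q, hQ⟩ := hP₂ j
      exact ⟨P + Q, fun x hx => by simp [hP x hx.1, hQ x hx.2]⟩
  smul_mem' := by
    rintro c f ⟨ι, _, U, hcl, hcov, hP⟩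
    refine ⟨ι, inferInstance, U, hcl, hcov, fun i => ?_⟩
    obtain ⟨P, hP⟩ := hP i
    exact ⟨Polynomial.C c * P, fun x hx => by simp [hP x hx]⟩

noncomputable def monoRst (n : ℕ) : Rst p X x₀ :=
  ⟨fun x => ((x -ᵥ x₀ : ℤ_[p]) : ℚ_[p]) ^ n, ⟨Polynomial.X ^ n, fun x => by simp⟩⟩

noncomputable def psiMap : (ℕ →₀ R0 p X) →ₗ[ℚ_[p]] TensorProduct ℚ_[p] (R0 p X) (Rst p X x₀) :=
  Finsupp.lsum ℚ_[p] fun n => (TensorProduct.mk ℚ_[p] (R0 p X) (Rst p X x₀)).flip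
    (monoRst p X x₀ n)

lemma psiMap_single (n : ℕ) (v : R0 p X) :
    psiMap p X x₀ (Finsupp.single n v) = v ⊗ₜ monoRst p X x₀ n := by
  simp [psiMap]

lemma psiMap_surjective : Function.Surjective (psiMap p X x₀) := by
  intro t
  induction t using TensorProduct.induction_on with
  | zero => exact ⟨0, map_zero _⟩
  | tmul m g =>
    obtain ⟨g, P, hP⟩ := g
    refine ⟨∑ n ∈ P.support, Finsupp.single n (P.coeff n • m), ?_⟩
    rw [map_sum]
    have hg : (⟨g, P, hP⟩ : Rst p X x₀) = ∑ n ∈ P.support, P.coeff n • monoRst p X x₀ n := by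
      apply Subtype.ext
      funext x
      have := hP x
      simp only [Submodule.coe_sum, Finset.sum_apply, SetLike.val_smul, Pi.smul_apply,
        monoRst, smul_eq_mul]
      rw [this, Polynomial.eval_eq_sum, Polynomial.sum_def]
    rw [hg, TensorProduct.tmul_sum]
    refine Finset.sum_congr rfl fun n hn => ?_
    rw [psiMap_single, TensorProduct.tmul_smul, TensorProduct.smul_tmul']
  | add a b ha hb =>
    obtain ⟨ca, rfl⟩ := ha
    obtain ⟨cb, rfl⟩ := hb
    exact ⟨ca + cb, map_add _ _ _⟩


lemma indicator_isLocallyConstant {X : Type*} [TopologicalSpace X] {V : Set X}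
    (h : IsClopen V) : IsLocallyConstant (V.indicator fun _ => (1 : ℚ_[p])) := by
  intro s
  classical
  have key : (V.indicator fun _ => (1 : ℚ_[p])) ⁻¹' s =
      (if (1 : ℚ_[p]) ∈ s then V else ∅) ∪ (if (0 : ℚ_[p]) ∈ s then Vᶜ else ∅) := by
    ext x
    by_cases hx : x ∈ V <;> simp only [Set.mem_preimage, Set.indicator_apply, hx,
      if_true, if_false, Set.mem_union] <;> split_ifs <;>
      simp_all
  rw [key]
  apply IsOpen.union <;> split_ifs <;>
    first
      | exact h.isOpen
      | exact isOpen_empty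
      | exact h.compl.isOpen

lemma padicInt_isOpen_infinite {T : Set ℤ_[p]} (hT : IsOpen T)
    (hne : T.Nonempty) : T.Infinite := by
  obtain ⟨a, ha⟩ := hne
  obtain ⟨ε, hε, hball⟩ := Metric.isOpen_iff.1 hT a ha
  have hp1 : (1 : ℝ) < p := by exact_mod_cast (Fact.out : p.Prime).one_lt
  obtain ⟨m, hm⟩ := exists_pow_lt_of_lt_one hε (by
    rw [inv_lt_one_iff₀]; right; exact hp1 : ((p : ℝ))⁻¹ < 1)
  have hpm : ((p : ℤ_[p]) ^ m) ≠ 0 := by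
    apply pow_ne_zero; exact_mod_cast Nat.cast_ne_zero.2 (Fact.out : p.Prime).ne_zero
  refine Set.infinite_of_injective_forall_mem
    (f := fun k : ℕ => a + (p : ℤ_[p]) ^ m * k) ?_ ?_
  · intro i j h
    simp only [add_right_inj] at h
    exact_mod_cast mul_left_cancel₀ hpm h
  · intro k
    apply hball
    simp only [Metric.mem_ball, dist_eq_norm, add_sub_cancel_left]
    calc ‖(p : ℤ_[p]) ^ m * k‖ ≤ ‖(p : ℤ_[p]) ^ m‖ * 1 := by
          rw [norm_mul]
          exact mul_le_mul_of_nonneg_left (PadicInt.norm_le_one _) (norm_nonneg _)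
      _ = ((p : ℝ))⁻¹ ^ m := by rw [mul_one, norm_pow, PadicInt.norm_p]
      _ < ε := hm

lemma key_vanish (hvadd : Continuous fun a : ℤ_[p] => a +ᵥ x₀)
    (s : Finset ℕ) (c : ℕ → X → ℚ_[p]) (hc : ∀ n, IsLocallyConstant (c n))
    (h : ∀ x, ∑ n ∈ s, c n x * ((x -ᵥ x₀ : ℤ_[p]) : ℚ_[p]) ^ n = 0) :
    ∀ n ∈ s, ∀ x, c n x = 0 := by
  intro n hn x
  choose U hUo hxU hUc using fun n => (hc n).exists_open x
  set V : Set X := ⋂ m ∈ s, U m with hV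
  have hVo : IsOpen V := isOpen_biInter_finset fun m _ => hUo m
  have hxV : x ∈ V := Set.mem_biInter fun m _ => hxU m
  set T : Set ℤ_[p] := (fun a => a +ᵥ x₀) ⁻¹' V with hT
  have hTo : IsOpen T := hVo.preimage hvadd
  have hTne : T.Nonempty := ⟨x -ᵥ x₀, by simpa [hT] using hxV⟩
  set Q : Polynomial ℚ_[p] := ∑ m ∈ s, Polynomial.C (c m x) * Polynomial.X ^ m with hQ
  have hroot : ∀ t ∈ T, Q.eval ((t : ℤ_[p]) : ℚ_[p]) = 0 := by
    intro t ht
    have hy : (t +ᵥ x₀ : X) ∈ V := ht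
    have hcy : ∀ m ∈ s, c m (t +ᵥ x₀) = c m x := fun m hm =>
      hUc m _ (Set.mem_iInter₂.1 hy m hm)
    have := h (t +ᵥ x₀)
    rw [vadd_vsub] at this
    simp only [hQ, Polynomial.eval_finset_sum, Polynomial.eval_mul, Polynomial.eval_C,
      Polynomial.eval_pow, Polynomial.eval_X]
    rw [← this]
    exact Finset.sum_congr rfl fun m hm => by rw [hcy m hm]
  have hQ0 : Q = 0 := by
    apply Polynomial.eq_zero_of_infinite_isRoot
    have hinf : (((↑) : ℤ_[p] → ℚ_[p]) '' T).Infinite :=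
      (padicInt_isOpen_infinite p hTo hTne).image (Set.injOn_of_injective Subtype.coe_injective)
    refine hinf.mono ?_
    rintro - ⟨t, ht, rfl⟩
    exact hroot t ht
  have : Q.coeff n = c n x := by
    simp only [hQ, Polynomial.finset_sum_coeff, Polynomial.coeff_C_mul,
      Polynomial.coeff_X_pow]
    rw [Finset.sum_eq_single n]
    · simp
    · intro m _ hmn; simp [Ne.symm hmn]
    · intro hns; exact absurd hn hns
  rw [← this, hQ0, Polynomial.coeff_zero]

/-- Let `X` be a `ℤ_p`-torsor (with its natural profinite topology).
Then the ring `R_φ` of locally polynomial `ℚ_p`-valued functions on `X` decomposes as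
`R_φ = R₀ ⊗ R_st`: the multiplication map `R₀ ⊗ R_st → R_φ`, `f ⊗ g ↦ f·g`, is an
isomorphism onto `R_φ`. -/
theorem stmt10
    (hvsub : Continuous fun x : X => (x -ᵥ x₀ : ℤ_[p]))
    (hvadd : Continuous fun a : ℤ_[p] => a +ᵥ x₀) :
    Function.Injective
      (TensorProduct.lift ((LinearMap.mul ℚ_[p] (X → ℚ_[p])).compl₁₂
        (R0 p X).subtype (Rst p X x₀).subtype)) ∧
    LinearMap.range
      (TensorProduct.lift ((LinearMap.mul ℚ_[p] (X → ℚ_[p])).compl₁₂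
        (R0 p X).subtype (Rst p X x₀).subtype)) = Rphi p X x₀ := by
  classical
  set L := TensorProduct.lift ((LinearMap.mul ℚ_[p] (X → ℚ_[p])).compl₁₂
      (R0 p X).subtype (Rst p X x₀).subtype) with hLdef
  have hLtmul : ∀ (a : R0 p X) (b : Rst p X x₀),
      L (a ⊗ₜ b) = (a : X → ℚ_[p]) * (b : X → ℚ_[p]) := by
    intro a b
    simp [hLdef, LinearMap.mul_apply']
  have hcomp : CompactSpace X := ⟨by
    have huniv : (Set.univ : Set X) = Set.range fun a : ℤ_[p] => a +ᵥ x₀ := by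
      ext x
      simp only [Set.mem_univ, Set.mem_range, true_iff]
      exact ⟨x -ᵥ x₀, vsub_vadd x x₀⟩
    rw [huniv]
    exact isCompact_range hvadd⟩
  constructor
  · -- injectivity
    rw [injective_iff_map_eq_zero]
    intro t ht
    obtain ⟨c, rfl⟩ := psiMap_surjective p X x₀ t
    suffices hc : c = 0 by rw [hc, map_zero]
    have hrep : L (psiMap p X x₀ c) =
        ∑ n ∈ c.support, ((c n : X → ℚ_[p]) * (monoRst p X x₀ n : X → ℚ_[p])) := by
      rw [psiMap, Finsupp.lsum_apply, Finsupp.sum, map_sum]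
      exact Finset.sum_congr rfl fun n _ => by
        rw [LinearMap.flip_apply]; exact hLtmul _ _
    have hzero : ∀ x, ∑ n ∈ c.support,
        (c n : X → ℚ_[p]) x * ((x -ᵥ x₀ : ℤ_[p]) : ℚ_[p]) ^ n = 0 := by
      intro x
      have := congrFun (hrep ▸ ht) x
      simpa [monoRst] using this
    have hvan := key_vanish p X x₀ hvadd c.support (fun n => (c n : X → ℚ_[p]))
      (fun n => (c n).2) hzero
    ext n a
    by_cases hn : n ∈ c.support
    · exact hvan n hn a
    · rw [Finsupp.notMem_support_iff.1 hn]; rfl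
  · -- range
    apply le_antisymm
    · rw [LinearMap.range_eq_map, ← TensorProduct.span_tmul_eq_top ℚ_[p] (R0 p X) (Rst p X x₀),
        Submodule.map_span, Submodule.span_le]
      rintro - ⟨-, ⟨a, b, rfl⟩, rfl⟩
      rw [SetLike.mem_coe, hLtmul]
      obtain ⟨P, hP⟩ := b.2
      refine ⟨↥(Set.range (a : X → ℚ_[p])),
        (IsLocallyConstant.range_finite a.2).fintype,
        fun c => (a : X → ℚ_[p]) ⁻¹' {(c : ℚ_[p])}, fun c => ?_, fun x => ?_, fun c => ?_⟩
      · constructor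
        · rw [← isOpen_compl_iff, ← Set.preimage_compl]
          exact a.2 _
        · exact a.2 _
      · exact ⟨⟨(a : X → ℚ_[p]) x, Set.mem_range_self x⟩, rfl⟩
      · refine ⟨Polynomial.C (c : ℚ_[p]) * P, fun x hx => ?_⟩
        have hax : (a : X → ℚ_[p]) x = c := hx
        simp [Pi.mul_apply, hax, hP x]
    · intro f hf
      obtain ⟨ι, _inst, U, hcl, hcov, hP⟩ := hf
      choose P hPr using hP
      set e := Fintype.equivFin ι with he
      set U' : Fin (Fintype.card ι) → Set X := fun k => U (e.symm k) with hU'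
      set V : Fin (Fintype.card ι) → Set X :=
        fun k => U' k \ ⋃ j, ⋃ (_ : j < k), U' j with hVdef
      have hVcl : ∀ k, IsClopen (V k) := by
        intro k
        refine (hcl _).diff ?_
        exact Set.Finite.isClopen_biUnion (Set.toFinite {j | j < k}) fun j _ => hcl _
      have hVkey : ∀ x, ∃ k, x ∈ V k ∧ ∀ k', x ∈ V k' → k' = k := by
        intro x
        obtain ⟨i, hi⟩ := hcov x
        set s : Finset (Fin (Fintype.card ι)) :=
          Finset.univ.filter (fun k => x ∈ U' k) with hs
        have hsne : s.Nonempty := ⟨e i, by simp [hs, hU', hi]⟩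
        set k₀ := s.min' hsne with hk₀
        have hk₀s : x ∈ U' k₀ := by
          have := s.min'_mem hsne
          simp only [hs, Finset.mem_filter] at this
          exact this.2
        have hxV : x ∈ V k₀ := by
          refine ⟨hk₀s, ?_⟩
          rintro ⟨Sj, ⟨j, rfl⟩, hmem⟩
          simp only [Set.mem_iUnion] at hmem
          obtain ⟨hjk, hxj⟩ := hmem
          have : j ∈ s := by simp [hs, hxj]
          exact absurd (s.min'_le j this) (not_le.2 hjk)
        refine ⟨k₀, hxV, ?_⟩
        intro k' hk'
        by_contra hne
        have hk's : k' ∈ s := by simp [hs, hk'.1]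
        have hlt : k₀ < k' := lt_of_le_of_ne (s.min'_le k' hk's) (Ne.symm hne)
        exact hk'.2 (Set.mem_iUnion.2 ⟨k₀, Set.mem_iUnion.2 ⟨hlt, hk₀s⟩⟩)
      refine ⟨∑ k, (⟨(V k).indicator fun _ => 1,
          indicator_isLocallyConstant p (hVcl k)⟩ : R0 p X) ⊗ₜ
          (⟨fun x => (P (e.symm k)).eval ((x -ᵥ x₀ : ℤ_[p]) : ℚ_[p]),
            ⟨P (e.symm k), fun _ => rfl⟩⟩ : Rst p X x₀), ?_⟩
      rw [map_sum]
      funext x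
      obtain ⟨k₀, hxk₀, huniq⟩ := hVkey x
      have hsum : ∀ k, (L ((⟨(V k).indicator fun _ => 1,
          indicator_isLocallyConstant p (hVcl k)⟩ : R0 p X) ⊗ₜ
          (⟨fun x => (P (e.symm k)).eval ((x -ᵥ x₀ : ℤ_[p]) : ℚ_[p]),
            ⟨P (e.symm k), fun _ => rfl⟩⟩ : Rst p X x₀))) x =
          (V k).indicator (fun _ => 1) x * (P (e.symm k)).eval ((x -ᵥ x₀ : ℤ_[p]) : ℚ_[p]) := by
        intro k
        rw [hLtmul]
        rfl
      rw [Finset.sum_apply]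
      rw [Finset.sum_congr rfl fun k _ => hsum k]
      rw [Finset.sum_eq_single k₀]
      · rw [Set.indicator_of_mem hxk₀, one_mul]
        exact (hPr (e.symm k₀) x hxk₀.1).symm
      · intro k _ hk
        rw [Set.indicator_of_notMem, zero_mul]
        intro hxk
        exact hk (huniq k hxk)
      · intro h
        exact absurd (Finset.mem_univ k₀) h


end stmt10
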